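/- Let a > b > 0, c² = a² − b², r = a*b/(a+b), and t ∈ ℝ. Define P₁ = (a·cos t, b·sin t), w₁ = sqrt(c²(a+b)²·cos²t + 2ab³ + b⁴), w₂ = −ab/((c²·cos²t + b²)(a+b)), P₂ = w₂·(a²·cos t − w₁·sin t, b²·sin t + w₁·cos t), and P₃ = w₂·(a²·cos t + w₁·sin t, b²·sin t − w₁·cos t). Then P₂ and P₃ lie on the ellipse x²/a² + y²/b² = 1, and each of the three lines P₁P₂, P₂P₃, P₃P₁ has distance exactly r from the origin. -/

import Mathlib

/-- The point of the plane with coordinates `(x, y)`. -/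
noncomputable def pt (x y : ℝ) : EuclideanSpace ℝ (Fin 2) := WithLp.toLp 2 ![x, y]

lemma pt_apply0 (x y : ℝ) : pt x y 0 = x := rfl
lemma pt_apply1 (x y : ℝ) : pt x y 1 = y := rfl

lemma norm_pt (x y : ℝ) : ‖pt x y‖ = Real.sqrt (x ^ 2 + y ^ 2) := by
  rw [EuclideanSpace.norm_eq]
  simp [pt, Fin.sum_univ_two, sq_abs]

lemma mem_line_iff (p0 p1 q0 q1 : ℝ) (x : EuclideanSpace ℝ (Fin 2)) :
    x ∈ (affineSpan ℝ {pt p0 p1, pt q0 q1} : Set (EuclideanSpace ℝ (Fin 2))) ↔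
      ∃ u : ℝ, x = pt (p0 + u * (q0 - p0)) (p1 + u * (q1 - p1)) := by
  constructor
  · intro hx
    have : (x -ᵥ pt p0 p1) +ᵥ pt p0 p1 ∈ line[ℝ, pt p0 p1, pt q0 q1] := by
      simpa using hx
    rw [vadd_left_mem_affineSpan_pair] at this
    obtain ⟨u, hu⟩ := this
    refine ⟨u, ?_⟩
    have hx' : x = u • (pt q0 q1 -ᵥ pt p0 p1) +ᵥ pt p0 p1 := by
      rw [hu]; simp
    rw [hx']
    ext i
    fin_cases i <;>
      simp [pt, Matrix.cons_val_zero, Matrix.cons_val_one] <;> ring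
  · rintro ⟨u, rfl⟩
    have : (pt (p0 + u * (q0 - p0)) (p1 + u * (q1 - p1)) : EuclideanSpace ℝ (Fin 2))
        = u • (pt q0 q1 -ᵥ pt p0 p1) +ᵥ pt p0 p1 := by
      ext i
      fin_cases i <;>
        simp [pt, Matrix.cons_val_zero, Matrix.cons_val_one] <;> ring
    rw [this]
    exact smul_vsub_vadd_mem_affineSpan_pair _ _ _

lemma infDist_line (p0 p1 q0 q1 : ℝ) (hn : (q0 - p0) ^ 2 + (q1 - p1) ^ 2 ≠ 0) :
    Metric.infDist 0 (affineSpan ℝ {pt p0 p1, pt q0 q1} : Set (EuclideanSpace ℝ (Fin 2))) =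
      |p0 * q1 - p1 * q0| / Real.sqrt ((q0 - p0) ^ 2 + (q1 - p1) ^ 2) := by
  set v0 := q0 - p0 with hv0
  set v1 := q1 - p1 with hv1
  set n := v0 ^ 2 + v1 ^ 2 with hnn
  have hn0 : 0 < n := lt_of_le_of_ne (by positivity) (Ne.symm hn)
  set s := -(p0 * v0 + p1 * v1) / n with hs
  set f0 := p0 + s * v0 with hf0
  set f1 := p1 + s * v1 with hf1
  have hFmem : pt f0 f1 ∈ (affineSpan ℝ {pt p0 p1, pt q0 q1} : Set (EuclideanSpace ℝ (Fin 2))) := by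
    rw [mem_line_iff]
    exact ⟨s, rfl⟩
  have hdot : f0 * v0 + f1 * v1 = 0 := by
    rw [hf0, hf1, hs]; field_simp; ring
  have hcross : f0 * v1 - f1 * v0 = p0 * q1 - p1 * q0 := by
    rw [hf0, hf1, hv0, hv1]; ring
  have hFsq : (f0 ^ 2 + f1 ^ 2) * n = (p0 * q1 - p1 * q0) ^ 2 := by
    have : (f0 ^ 2 + f1 ^ 2) * n = (f0 * v1 - f1 * v0) ^ 2 + (f0 * v0 + f1 * v1) ^ 2 := by
      rw [hnn]; ring
    rw [this, hdot, hcross]; ring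
  have hsqrtn : Real.sqrt n > 0 := Real.sqrt_pos.mpr hn0
  have hdistF : dist (0 : EuclideanSpace ℝ (Fin 2)) (pt f0 f1)
      = |p0 * q1 - p1 * q0| / Real.sqrt n := by
    rw [dist_zero_left, norm_pt]
    have h1 : f0 ^ 2 + f1 ^ 2 = (p0 * q1 - p1 * q0) ^ 2 / n := by
      field_simp at hFsq ⊢; linarith [hFsq]
    rw [h1, Real.sqrt_div (by positivity), Real.sqrt_sq_eq_abs]
  apply le_antisymm
  · calc Metric.infDist 0 (affineSpan ℝ {pt p0 p1, pt q0 q1} : Set (EuclideanSpace ℝ (Fin 2)))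
        ≤ dist 0 (pt f0 f1) := Metric.infDist_le_dist_of_mem hFmem
    _ = _ := hdistF
  · have bound : ∀ y ∈ (affineSpan ℝ {pt p0 p1, pt q0 q1} : Set (EuclideanSpace ℝ (Fin 2))),
        |p0 * q1 - p1 * q0| / Real.sqrt n ≤ dist 0 y := by
      intro y hy
      rw [mem_line_iff] at hy
      obtain ⟨u, rfl⟩ := hy
      rw [dist_zero_left, norm_pt]
      set y0 := p0 + u * (q0 - p0) with hy0
      set y1 := p1 + u * (q1 - p1) with hy1
      rw [Real.le_sqrt (by positivity)]
      rw [div_pow, Real.sq_sqrt hn0.le, sq_abs, div_le_iff₀ hn0]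
      have hycross : y0 * v1 - y1 * v0 = p0 * q1 - p1 * q0 := by
        rw [hy0, hy1, hv0, hv1]; ring
      have hid : (y0 ^ 2 + y1 ^ 2) * n = (y0 * v1 - y1 * v0) ^ 2 + (y0 * v0 + y1 * v1) ^ 2 := by
        rw [hnn]; ring
      rw [hycross] at hid
      nlinarith [sq_nonneg (y0 * v0 + y1 * v1)]
      positivity
    by_contra hcon
    push_neg at hcon
    rw [Metric.infDist_lt_iff ⟨_, hFmem⟩] at hcon
    obtain ⟨y, hy, hlt⟩ := hcon
    exact absurd hlt (not_lt.mpr (bound y hy))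


set_option maxHeartbeats 2000000 in
set_option maxRecDepth 8000 in
theorem incircle_family_parametrization (a b c t : ℝ) (hb : 0 < b) (hab : b < a)
    (hc : c ^ 2 = a ^ 2 - b ^ 2)
    (r : ℝ) (hr : r = a * b / (a + b))
    (w₁ w₂ : ℝ)
    (hw₁ : w₁ = Real.sqrt (c ^ 2 * (a + b) ^ 2 * Real.cos t ^ 2 + 2 * a * b ^ 3 + b ^ 4))
    (hw₂ : w₂ = -(a * b) / ((c ^ 2 * Real.cos t ^ 2 + b ^ 2) * (a + b)))
    (P₁ P₂ P₃ : EuclideanSpace ℝ (Fin 2))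
    (hP₁ : P₁ = pt (a * Real.cos t) (b * Real.sin t))
    (hP₂ : P₂ = pt (w₂ * (a ^ 2 * Real.cos t - w₁ * Real.sin t))
                   (w₂ * (b ^ 2 * Real.sin t + w₁ * Real.cos t)))
    (hP₃ : P₃ = pt (w₂ * (a ^ 2 * Real.cos t + w₁ * Real.sin t))
                   (w₂ * (b ^ 2 * Real.sin t - w₁ * Real.cos t))) :
    ((P₂ 0) ^ 2 / a ^ 2 + (P₂ 1) ^ 2 / b ^ 2 = 1 ∧
     (P₃ 0) ^ 2 / a ^ 2 + (P₃ 1) ^ 2 / b ^ 2 = 1) ∧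
    Metric.infDist 0 (affineSpan ℝ {P₁, P₂} : Set (EuclideanSpace ℝ (Fin 2))) = r ∧
    Metric.infDist 0 (affineSpan ℝ {P₂, P₃} : Set (EuclideanSpace ℝ (Fin 2))) = r ∧
    Metric.infDist 0 (affineSpan ℝ {P₃, P₁} : Set (EuclideanSpace ℝ (Fin 2))) = r := by
  have hCS : Real.sin t ^ 2 + Real.cos t ^ 2 = 1 := Real.sin_sq_add_cos_sq t
  set C := Real.cos t with hCdef
  set S := Real.sin t with hSdef
  have ha : 0 < a := hb.trans hab
  have hapb : 0 < a + b := by linarith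
  rw [hc] at hw₁ hw₂
  have hd : 0 < (a ^ 2 - b ^ 2) * C ^ 2 + b ^ 2 := by nlinarith [sq_nonneg C]
  have hDpos : 0 < (((a^2-b^2)*C^2+b^2)*(a+b)) := mul_pos hd hapb
  have hD2ne : (((a^2-b^2)*C^2+b^2)*(a+b))^2 ≠ 0 := pow_ne_zero 2 hDpos.ne'
  have hv : w₂ * (((a^2-b^2)*C^2+b^2)*(a+b)) = -(a * b) := by
    rw [hw₂]; field_simp
  have hargpos : 0 < (a ^ 2 - b ^ 2) * (a + b) ^ 2 * C ^ 2 + 2 * a * b ^ 3 + b ^ 4 := by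
    have h1 : 0 ≤ (a ^ 2 - b ^ 2) * (a + b) ^ 2 * C ^ 2 :=
      mul_nonneg (mul_nonneg (by nlinarith) (by positivity)) (sq_nonneg C)
    nlinarith [h1, mul_pos ha (pow_pos hb 3), pow_pos hb 4]
  have hw1sq : w₁ ^ 2 = (a ^ 2 - b ^ 2) * (a + b) ^ 2 * C ^ 2 + 2 * a * b ^ 3 + b ^ 4 := by
    rw [hw₁]; exact Real.sq_sqrt hargpos.le
  have hw1pos : 0 < w₁ := by rw [hw₁]; exact Real.sqrt_pos.mpr hargpos
  have hw2ne : w₂ ≠ 0 := by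
    intro h; rw [h, zero_mul] at hv; nlinarith
  have hrpos : 0 < r := by rw [hr]; positivity
  have hb2 : b ≤ a*C^2+b*S^2 := by nlinarith [sq_nonneg C]
  have posL : 0 < w₁*(a*C^2+b*S^2) := mul_pos hw1pos (lt_of_lt_of_le hb hb2)
  have habs : (a*b*C*S*(a-b))^2 < (w₁*(a*C^2+b*S^2))^2 := by
    have hbb : b*b ≤ (a*C^2+b*S^2)*(a*C^2+b*S^2) := mul_self_le_mul_self hb.le hb2
    have hL2 : w₁^2*b^2 ≤ (w₁*(a*C^2+b*S^2))^2 := by nlinarith [hbb, sq_nonneg w₁]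
    have hR : (a*b*C*S*(a-b))^2 ≤ a^2*b^2*C^2*(a-b)^2 := by
      nlinarith [sq_nonneg S, sq_nonneg (a*b*C*(a-b)), sq_nonneg (a*b*C*(a-b)*S), sq_nonneg (a*b*C*(a-b)*C)]
    have hkey : 0 ≤ C^2 * (b^2*(a-b)*(4*a^2*b+3*a*b^2+b^3)) := by
      apply mul_nonneg (sq_nonneg C)
      apply mul_nonneg (mul_nonneg (sq_nonneg b) (by linarith))
      nlinarith [mul_pos (mul_pos ha ha) hb, mul_pos (mul_pos ha hb) hb, pow_pos hb 3]
    have hmid : a^2*b^2*C^2*(a-b)^2 < ((a ^ 2 - b ^ 2) * (a + b) ^ 2 * C ^ 2 + 2 * a * b ^ 3 + b ^ 4)*b^2 := by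
      nlinarith [hkey, mul_pos (mul_pos ha hb) (mul_pos (mul_pos hb hb) (mul_pos hb hb)), pow_pos hb 6]
    calc (a*b*C*S*(a-b))^2 ≤ a^2*b^2*C^2*(a-b)^2 := hR
      _ < ((a ^ 2 - b ^ 2) * (a + b) ^ 2 * C ^ 2 + 2 * a * b ^ 3 + b ^ 4)*b^2 := hmid
      _ = w₁^2*b^2 := by rw [hw1sq]
      _ ≤ _ := hL2
  have X12pos : 0 < w₁*(a*C^2+b*S^2) - a*b*C*S*(a-b) := by nlinarith [habs, posL]
  have X31pos : 0 < w₁*(a*C^2+b*S^2) + a*b*C*S*(a-b) := by nlinarith [habs, posL]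
  have h20 : P₂ 0 = (w₂*(a^2*C - w₁*S)) := by rw [hP₂]; rfl
  have h21 : P₂ 1 = (w₂*(b^2*S + w₁*C)) := by rw [hP₂]; rfl
  have h30 : P₃ 0 = (w₂*(a^2*C + w₁*S)) := by rw [hP₃]; rfl
  have h31 : P₃ 1 = (w₂*(b^2*S - w₁*C)) := by rw [hP₃]; rfl

  have keyE2 : (b^2*(w₂*(a^2*C - w₁*S))^2 + a^2*(w₂*(b^2*S + w₁*C))^2) * (((a^2-b^2)*C^2+b^2)*(a+b))^2 = a^2*b^2 * (((a^2-b^2)*C^2+b^2)*(a+b))^2 := by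
    linear_combination (a^7*b^2*C^4*w₂ + a^6*b^3*C^4*w₂ - a^5*b^4*C^4*w₂ + a^5*b^4*C^2*S^2*w₂ + a^5*b^4*C^2*w₂ - a^5*b^3*C^2 + a^5*C^4*w₁^2*w₂ - a^4*b^5*C^4*w₂ + a^4*b^5*C^2*S^2*w₂ + a^4*b^5*C^2*w₂ + a^4*b*C^4*w₁^2*w₂ - a^3*b^6*C^2*S^2*w₂ + a^3*b^6*S^2*w₂ - a^3*b^5*S^2 - a^3*b^2*C^4*w₁^2*w₂ + a^3*b^2*C^2*S^2*w₁^2*w₂ + a^3*b^2*C^2*w₁^2*w₂ - a^3*b*C^2*w₁^2 - a^2*b^7*C^2*S^2*w₂ + a^2*b^7*S^2*w₂ - a^2*b^3*C^4*w₁^2*w₂ + a^2*b^3*C^2*S^2*w₁^2*w₂ + a^2*b^3*C^2*w₁^2*w₂ - a*b^4*C^2*S^2*w₁^2*w₂ + a*b^4*S^2*w₁^2*w₂ - a*b^3*S^2*w₁^2 - b^5*C^2*S^2*w₁^2*w₂ + b^5*S^2*w₁^2*w₂) * hv + (a^4*b^2*C^2 + a^2*b^4*S^2) * hw1sq + (a^6*b^4*C^2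 + 2*a^5*b^5*C^2 + a^4*b^6 - 2*a^3*b^7*C^2 + 2*a^3*b^7 - a^2*b^8*C^2 + a^2*b^8) * hCS
  have TE2 : b^2*(w₂*(a^2*C - w₁*S))^2 + a^2*(w₂*(b^2*S + w₁*C))^2 = a^2*b^2 := mul_right_cancel₀ hD2ne keyE2


  have keyE3 : (b^2*(w₂*(a^2*C + w₁*S))^2 + a^2*(w₂*(b^2*S - w₁*C))^2) * (((a^2-b^2)*C^2+b^2)*(a+b))^2 = a^2*b^2 * (((a^2-b^2)*C^2+b^2)*(a+b))^2 := by
    linear_combination (a^7*b^2*C^4*w₂ + a^6*b^3*C^4*w₂ - a^5*b^4*C^4*w₂ + a^5*b^4*C^2*S^2*w₂ + a^5*b^4*C^2*w₂ - a^5*b^3*C^2 + a^5*C^4*w₁^2*w₂ - a^4*b^5*C^4*w₂ + a^4*b^5*C^2*S^2*w₂ + a^4*b^5*C^2*w₂ + a^4*b*C^4*w₁^2*w₂ - a^3*b^6*C^2*S^2*w₂ + a^3*b^6*S^2*w₂ - a^3*b^5*S^2 - a^3*b^2*C^4*w₁^2*w₂ + a^3*b^2*C^2*S^2*w₁^2*w₂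 + a^3*b^2*C^2*w₁^2*w₂ - a^3*b*C^2*w₁^2 - a^2*b^7*C^2*S^2*w₂ + a^2*b^7*S^2*w₂ - a^2*b^3*C^4*w₁^2*w₂ + a^2*b^3*C^2*S^2*w₁^2*w₂ + a^2*b^3*C^2*w₁^2*w₂ - a*b^4*C^2*S^2*w₁^2*w₂ + a*b^4*S^2*w₁^2*w₂ - a*b^3*S^2*w₁^2 - b^5*C^2*S^2*w₁^2*w₂ + b^5*S^2*w₁^2*w₂) * hv + (a^4*b^2*C^2 + a^2*b^4*S^2) * hw1sq + (a^6*b^4*C^2 + 2*a^5*b^5*C^2 + a^4*b^6 - 2*a^3*b^7*C^2 + 2*a^3*b^7 - a^2*b^8*C^2 + a^2*b^8) * hCS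
  have TE3 : b^2*(w₂*(a^2*C + w₁*S))^2 + a^2*(w₂*(b^2*S - w₁*C))^2 = a^2*b^2 := mul_right_cancel₀ hD2ne keyE3


  have key12 : (a*b)^2 * (((w₂*(a^2*C - w₁*S))-(a*C))^2+((w₂*(b^2*S + w₁*C))-(b*S))^2) * (((a^2-b^2)*C^2+b^2)*(a+b))^2 = ((a*C)*(w₂*(b^2*S + w₁*C))-(b*S)*(w₂*(a^2*C - w₁*S)))^2*(a+b)^2 * (((a^2-b^2)*C^2+b^2)*(a+b))^2 := by
    linear_combination (-a^9*b^2*C^4*S^2*w₂ + a^9*b^2*C^4*w₂ - a^8*b^3*C^4*S^2*w₂ + a^8*b^3*C^4*w₂ - 2*a^8*b^2*C^4 + 2*a^8*b*C^5*S*w₁*w₂ + 3*a^7*b^4*C^4*S^2*w₂ - a^7*b^4*C^4*w₂ - a^7*b^4*C^2*S^2*w₂ + a^7*b^4*C^2*w₂ - 2*a^7*b^3*C^4 + a^7*b^3*C^2*S^2 - a^7*b^3*C^2 + 4*a^7*b^2*C^5*S*w₁*w₂ + 2*a^7*b^2*C^3*S^3*w₁*w₂ - 2*a^7*b^2*C^3*S*w₁*w₂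 - a^7*C^6*w₁^2*w₂ + 3*a^6*b^5*C^4*S^2*w₂ - a^6*b^5*C^4*w₂ - a^6*b^5*C^2*S^2*w₂ + a^6*b^5*C^2*w₂ + 2*a^6*b^4*C^4 - 2*a^6*b^4*C^2 - 2*a^6*b^3*C^5*S*w₁*w₂ + 4*a^6*b^3*C^3*S^3*w₁*w₂ - 3*a^6*b*C^6*w₁^2*w₂ - 2*a^6*b*C^4*S^2*w₁^2*w₂ - 3*a^5*b^6*C^4*S^2*w₂ + 3*a^5*b^6*C^2*S^2*w₂ + 2*a^5*b^5*C^4 - 4*a^5*b^5*C^2*S^2 - 2*a^5*b^5*C^2 - 8*a^5*b^4*C^5*S*w₁*w₂ - 2*a^5*b^4*C^3*S^3*w₁*w₂ + 8*a^5*b^4*C^3*S*w₁*w₂ + 2*a^5*b^4*C*S^3*w₁*w₂ - 2*a^5*b^4*C*S*w₁*w₂ - 2*a^5*b^3*C^3*S*w₁ - 2*a^5*b^3*C*S^3*w₁ + 2*a^5*b^3*C*S*w₁ - 2*a^5*b^2*C^6*w₁^2*w₂ - 6*a^5*b^2*C^4*S^2*w₁^2*w₂ - a^5*b^2*C^2*S^4*w₁^2*w₂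 + a^5*b^2*C^2*S^2*w₁^2*w₂ + a^5*b*C^4*w₁^2 - 3*a^4*b^7*C^4*S^2*w₂ + 3*a^4*b^7*C^2*S^2*w₂ - 2*a^4*b^6*C^2*S^2 - 2*a^4*b^5*C^5*S*w₁*w₂ - 8*a^4*b^5*C^3*S^3*w₁*w₂ + 4*a^4*b^5*C^3*S*w₁*w₂ + 4*a^4*b^5*C*S^3*w₁*w₂ - 2*a^4*b^5*C*S*w₁*w₂ - 2*a^4*b^4*C^3*S*w₁ - 2*a^4*b^4*C*S^3*w₁ + 2*a^4*b^4*C*S*w₁ + 2*a^4*b^3*C^6*w₁^2*w₂ - 4*a^4*b^3*C^4*S^2*w₁^2*w₂ - 2*a^4*b^3*C^4*w₁^2*w₂ - 3*a^4*b^3*C^2*S^4*w₁^2*w₂ - a^4*b^3*C^2*S^2*w₁^2*w₂ + 2*a^4*b^2*C^4*w₁^2 + 2*a^4*b^2*C^2*S^2*w₁^2 + a^3*b^8*C^4*S^2*w₂ - 2*a^3*b^8*C^2*S^2*w₂ + a^3*b^8*S^2*w₂ + 3*a^3*b^7*C^2*S^2 - 3*a^3*b^7*S^2 + 4*a^3*b^6*C^5*S*w₁*w₂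 - 2*a^3*b^6*C^3*S^3*w₁*w₂ - 6*a^3*b^6*C^3*S*w₁*w₂ + 2*a^3*b^6*C*S*w₁*w₂ + 2*a^3*b^5*C^3*S*w₁ + 2*a^3*b^5*C*S^3*w₁ - 2*a^3*b^5*C*S*w₁ + 3*a^3*b^4*C^6*w₁^2*w₂ + 4*a^3*b^4*C^4*S^2*w₁^2*w₂ - 4*a^3*b^4*C^4*w₁^2*w₂ - 2*a^3*b^4*C^2*S^4*w₁^2*w₂ - 7*a^3*b^4*C^2*S^2*w₁^2*w₂ + a^3*b^4*C^2*w₁^2*w₂ - a^3*b^4*S^4*w₁^2*w₂ + a^3*b^4*S^2*w₁^2*w₂ + a^3*b^3*C^4*w₁^2 + 4*a^3*b^3*C^2*S^2*w₁^2 - a^3*b^3*C^2*w₁^2 + a^3*b^3*S^4*w₁^2 - a^3*b^3*S^2*w₁^2 + a^2*b^9*C^4*S^2*w₂ - 2*a^2*b^9*C^2*S^2*w₂ + a^2*b^9*S^2*w₂ + 2*a^2*b^8*C^2*S^2 - 2*a^2*b^8*S^2 + 2*a^2*b^7*C^5*S*w₁*w₂ + 4*a^2*b^7*C^3*S^3*w₁*w₂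 - 4*a^2*b^7*C^3*S*w₁*w₂ - 4*a^2*b^7*C*S^3*w₁*w₂ + 2*a^2*b^7*C*S*w₁*w₂ + 2*a^2*b^6*C^3*S*w₁ + 2*a^2*b^6*C*S^3*w₁ - 2*a^2*b^6*C*S*w₁ + a^2*b^5*C^6*w₁^2*w₂ + 6*a^2*b^5*C^4*S^2*w₁^2*w₂ - 2*a^2*b^5*C^4*w₁^2*w₂ + 2*a^2*b^5*C^2*S^4*w₁^2*w₂ - 7*a^2*b^5*C^2*S^2*w₁^2*w₂ + a^2*b^5*C^2*w₁^2*w₂ - 3*a^2*b^5*S^4*w₁^2*w₂ + a^2*b^5*S^2*w₁^2*w₂ + 2*a^2*b^4*C^2*S^2*w₁^2 + 2*a^2*b^4*S^4*w₁^2 + 2*a*b^8*C^3*S^3*w₁*w₂ - 2*a*b^8*C*S^3*w₁*w₂ + 2*a*b^6*C^4*S^2*w₁^2*w₂ + 3*a*b^6*C^2*S^4*w₁^2*w₂ - 2*a*b^6*C^2*S^2*w₁^2*w₂ - 3*a*b^6*S^4*w₁^2*w₂ + a*b^5*S^4*w₁^2 + b^7*C^2*S^4*w₁^2*w₂ - b^7*S^4*w₁^2*w₂)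 * hv + (-a^6*b^2*C^4 - 2*a^5*b^3*C^4 - 2*a^5*b^3*C^2*S^2 - a^4*b^4*C^4 - 4*a^4*b^4*C^2*S^2 + a^4*b^4*C^2 - a^4*b^4*S^4 + a^4*b^4*S^2 - 2*a^3*b^5*C^2*S^2 - 2*a^3*b^5*S^4 - a^2*b^6*S^4) * hw1sq + (-2*a^9*b^3*C^4 - 6*a^8*b^4*C^4 - a^8*b^4*C^2*S^2 - a^8*b^4*C^2 - 4*a^7*b^5*C^4 - 4*a^7*b^5*C^2*S^2 - 2*a^7*b^5*C^2 + 4*a^6*b^6*C^4 - 5*a^6*b^6*C^2*S^2 - 3*a^6*b^6*C^2 + 2*a^6*b^4*C*S*w₁ + 6*a^5*b^7*C^4 - 4*a^5*b^7*C^2 - 2*a^5*b^7*S^2 + 2*a^5*b^5*C*S*w₁ + 2*a^4*b^8*C^4 + 5*a^4*b^8*C^2*S^2 - 2*a^4*b^8*C^2 - 5*a^4*b^8*S^2 - 2*a^4*b^6*C*S*w₁ + 4*a^3*b^9*C^2*S^2 - 4*a^3*b^9*S^2 - 2*a^3*b^7*C*S*w₁ + a^2*b^10*C^2*S^2 - a^2*b^10*S^2)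 * hCS
  have T12 : (a*b)^2 * (((w₂*(a^2*C - w₁*S))-(a*C))^2+((w₂*(b^2*S + w₁*C))-(b*S))^2) = ((a*C)*(w₂*(b^2*S + w₁*C))-(b*S)*(w₂*(a^2*C - w₁*S)))^2*(a+b)^2 :=
    mul_right_cancel₀ hD2ne (key12)
  have hB12 : r^2 * (((w₂*(a^2*C - w₁*S))-(a*C))^2+((w₂*(b^2*S + w₁*C))-(b*S))^2) = ((a*C)*(w₂*(b^2*S + w₁*C))-(b*S)*(w₂*(a^2*C - w₁*S)))^2 := by
    rw [hr]; field_simp; linear_combination T12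
  have hcr12 : ((a*C)*(w₂*(b^2*S + w₁*C))-(b*S)*(w₂*(a^2*C - w₁*S))) = w₂ * (w₁*(a*C^2+b*S^2) - a*b*C*S*(a-b)) := by ring
  have hcr12ne : ((a*C)*(w₂*(b^2*S + w₁*C))-(b*S)*(w₂*(a^2*C - w₁*S))) ≠ 0 := by
    rw [hcr12]; exact mul_ne_zero hw2ne (ne_of_gt X12pos)
  have c12sq : 0 < ((a*C)*(w₂*(b^2*S + w₁*C))-(b*S)*(w₂*(a^2*C - w₁*S)))^2 :=
    lt_of_le_of_ne (sq_nonneg _) (Ne.symm (pow_ne_zero 2 hcr12ne))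
  have hn12 : 0 < (((w₂*(a^2*C - w₁*S))-(a*C))^2+((w₂*(b^2*S + w₁*C))-(b*S))^2) := by
    have h0 : 0 < r^2 * (((w₂*(a^2*C - w₁*S))-(a*C))^2+((w₂*(b^2*S + w₁*C))-(b*S))^2) := by rw [hB12]; exact c12sq
    by_contra hcon
    push_neg at hcon
    exact absurd h0 (not_lt.mpr (mul_nonpos_of_nonneg_of_nonpos (sq_nonneg r) hcon))
  have habs12 : |((a*C)*(w₂*(b^2*S + w₁*C))-(b*S)*(w₂*(a^2*C - w₁*S)))| = r * Real.sqrt (((w₂*(a^2*C - w₁*S))-(a*C))^2+((w₂*(b^2*S + w₁*C))-(b*S))^2) := by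
    have h1 : Real.sqrt (((a*C)*(w₂*(b^2*S + w₁*C))-(b*S)*(w₂*(a^2*C - w₁*S)))^2) = Real.sqrt (r^2 * (((w₂*(a^2*C - w₁*S))-(a*C))^2+((w₂*(b^2*S + w₁*C))-(b*S))^2)) := by rw [hB12]
    rwa [Real.sqrt_sq_eq_abs, Real.sqrt_mul (sq_nonneg r), Real.sqrt_sq hrpos.le] at h1


  have key23 : (a*b)^2 * (((w₂*(a^2*C + w₁*S))-(w₂*(a^2*C - w₁*S)))^2+((w₂*(b^2*S - w₁*C))-(w₂*(b^2*S + w₁*C)))^2) * (((a^2-b^2)*C^2+b^2)*(a+b))^2 * (((a^2-b^2)*C^2+b^2)*(a+b))^2 = ((w₂*(a^2*C - w₁*S))*(w₂*(b^2*S - w₁*C))-(w₂*(b^2*S + w₁*C))*(w₂*(a^2*C + w₁*S)))^2*(a+b)^2 * (((a^2-b^2)*C^2+b^2)*(a+b))^2 * (((a^2-b^2)*C^2+b^2)*(a+b))^2 := by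
    linear_combination (-4*a^15*C^10*w₁^2*w₂^3 - 20*a^14*b*C^10*w₁^2*w₂^3 - 28*a^13*b^2*C^10*w₁^2*w₂^3 - 8*a^13*b^2*C^8*S^2*w₁^2*w₂^3 - 12*a^13*b^2*C^8*w₁^2*w₂^3 + 4*a^13*b*C^8*w₁^2*w₂^2 + 20*a^12*b^3*C^10*w₁^2*w₂^3 - 40*a^12*b^3*C^8*S^2*w₁^2*w₂^3 - 60*a^12*b^3*C^8*w₁^2*w₂^3 + 16*a^12*b^2*C^8*w₁^2*w₂^2 + 88*a^11*b^4*C^10*w₁^2*w₂^3 - 56*a^11*b^4*C^8*S^2*w₁^2*w₂^3 - 96*a^11*b^4*C^8*w₁^2*w₂^3 - 4*a^11*b^4*C^6*S^4*w₁^2*w₂^3 - 24*a^11*b^4*C^6*S^2*w₁^2*w₂^3 - 12*a^11*b^4*C^6*w₁^2*w₂^3 + 16*a^11*b^3*C^8*w₁^2*w₂^2 + 8*a^11*b^3*C^6*S^2*w₁^2*w₂^2 + 8*a^11*b^3*C^6*w₁^2*w₂^2 + 4*a^11*b^2*C^8*w₁^2*w₂ + 4*a^11*b^2*C^6*S^2*w₁^2*w₂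 - 4*a^11*b^2*C^6*w₁^2*w₂ + 56*a^10*b^5*C^10*w₁^2*w₂^3 + 40*a^10*b^5*C^8*S^2*w₁^2*w₂^3 - 20*a^10*b^5*C^6*S^4*w₁^2*w₂^3 - 120*a^10*b^5*C^6*S^2*w₁^2*w₂^3 - 60*a^10*b^5*C^6*w₁^2*w₂^3 - 16*a^10*b^4*C^8*w₁^2*w₂^2 + 32*a^10*b^4*C^6*S^2*w₁^2*w₂^2 + 32*a^10*b^4*C^6*w₁^2*w₂^2 + 12*a^10*b^3*C^8*w₁^2*w₂ + 12*a^10*b^3*C^6*S^2*w₁^2*w₂ - 12*a^10*b^3*C^6*w₁^2*w₂ - 56*a^9*b^6*C^10*w₁^2*w₂^3 + 176*a^9*b^6*C^8*S^2*w₁^2*w₂^3 + 168*a^9*b^6*C^8*w₁^2*w₂^3 - 28*a^9*b^6*C^6*S^4*w₁^2*w₂^3 - 192*a^9*b^6*C^6*S^2*w₁^2*w₂^3 - 108*a^9*b^6*C^6*w₁^2*w₂^3 - 12*a^9*b^6*C^4*S^4*w₁^2*w₂^3 - 24*a^9*b^6*C^4*S^2*w₁^2*w₂^3 - 4*a^9*b^6*C^4*w₁^2*w₂^3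 - 40*a^9*b^5*C^8*w₁^2*w₂^2 + 32*a^9*b^5*C^6*S^2*w₁^2*w₂^2 + 40*a^9*b^5*C^6*w₁^2*w₂^2 + 4*a^9*b^5*C^4*S^4*w₁^2*w₂^2 + 16*a^9*b^5*C^4*S^2*w₁^2*w₂^2 + 4*a^9*b^5*C^4*w₁^2*w₂^2 + 4*a^9*b^4*C^6*w₁^2*w₂ + 4*a^9*b^4*C^4*S^2*w₁^2*w₂ - 4*a^9*b^4*C^4*w₁^2*w₂ - 4*a^9*b^3*C^6*w₁^2 - 4*a^9*b^3*C^4*S^2*w₁^2 + 4*a^9*b^3*C^4*w₁^2 - 88*a^8*b^7*C^10*w₁^2*w₂^3 + 112*a^8*b^7*C^8*S^2*w₁^2*w₂^3 + 168*a^8*b^7*C^8*w₁^2*w₂^3 + 20*a^8*b^7*C^6*S^4*w₁^2*w₂^3 - 60*a^8*b^7*C^6*w₁^2*w₂^3 - 60*a^8*b^7*C^4*S^4*w₁^2*w₂^3 - 120*a^8*b^7*C^4*S^2*w₁^2*w₂^3 - 20*a^8*b^7*C^4*w₁^2*w₂^3 - 16*a^8*b^6*C^8*w₁^2*w₂^2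 - 32*a^8*b^6*C^6*S^2*w₁^2*w₂^2 + 16*a^8*b^6*C^4*S^4*w₁^2*w₂^2 + 64*a^8*b^6*C^4*S^2*w₁^2*w₂^2 + 16*a^8*b^6*C^4*w₁^2*w₂^2 - 32*a^8*b^5*C^8*w₁^2*w₂ - 32*a^8*b^5*C^6*S^2*w₁^2*w₂ + 44*a^8*b^5*C^6*w₁^2*w₂ + 12*a^8*b^5*C^4*S^2*w₁^2*w₂ - 12*a^8*b^5*C^4*w₁^2*w₂ - 8*a^8*b^4*C^6*w₁^2 - 8*a^8*b^4*C^4*S^2*w₁^2 + 8*a^8*b^4*C^4*w₁^2 - 20*a^7*b^8*C^10*w₁^2*w₂^3 - 112*a^7*b^8*C^8*S^2*w₁^2*w₂^3 + 88*a^7*b^8*C^6*S^4*w₁^2*w₂^3 + 336*a^7*b^8*C^6*S^2*w₁^2*w₂^3 + 60*a^7*b^8*C^6*w₁^2*w₂^3 - 96*a^7*b^8*C^4*S^4*w₁^2*w₂^3 - 216*a^7*b^8*C^4*S^2*w₁^2*w₂^3 - 40*a^7*b^8*C^4*w₁^2*w₂^3 - 12*a^7*b^8*C^2*S^4*w₁^2*w₂^3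 - 8*a^7*b^8*C^2*S^2*w₁^2*w₂^3 + 16*a^7*b^7*C^8*w₁^2*w₂^2 - 80*a^7*b^7*C^6*S^2*w₁^2*w₂^2 - 40*a^7*b^7*C^6*w₁^2*w₂^2 + 16*a^7*b^7*C^4*S^4*w₁^2*w₂^2 + 80*a^7*b^7*C^4*S^2*w₁^2*w₂^2 + 24*a^7*b^7*C^4*w₁^2*w₂^2 + 8*a^7*b^7*C^2*S^4*w₁^2*w₂^2 + 8*a^7*b^7*C^2*S^2*w₁^2*w₂^2 - 24*a^7*b^6*C^8*w₁^2*w₂ - 24*a^7*b^6*C^6*S^2*w₁^2*w₂ + 24*a^7*b^6*C^6*w₁^2*w₂ - 4*a^7*b^6*C^4*S^2*w₁^2*w₂ - 4*a^7*b^6*C^2*S^4*w₁^2*w₂ + 4*a^7*b^6*C^2*S^2*w₁^2*w₂ + 4*a^7*b^5*C^6*w₁^2 + 4*a^7*b^5*C^4*S^2*w₁^2 - 4*a^7*b^5*C^4*w₁^2 + 28*a^6*b^9*C^10*w₁^2*w₂^3 - 176*a^6*b^9*C^8*S^2*w₁^2*w₂^3 - 96*a^6*b^9*C^8*w₁^2*w₂^3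 + 56*a^6*b^9*C^6*S^4*w₁^2*w₂^3 + 336*a^6*b^9*C^6*S^2*w₁^2*w₂^3 + 108*a^6*b^9*C^6*w₁^2*w₂^3 - 120*a^6*b^9*C^4*S^2*w₁^2*w₂^3 - 40*a^6*b^9*C^4*w₁^2*w₂^3 - 60*a^6*b^9*C^2*S^4*w₁^2*w₂^3 - 40*a^6*b^9*C^2*S^2*w₁^2*w₂^3 + 16*a^6*b^8*C^8*w₁^2*w₂^2 - 32*a^6*b^8*C^6*S^2*w₁^2*w₂^2 - 32*a^6*b^8*C^6*w₁^2*w₂^2 - 16*a^6*b^8*C^4*S^4*w₁^2*w₂^2 + 16*a^6*b^8*C^4*w₁^2*w₂^2 + 32*a^6*b^8*C^2*S^4*w₁^2*w₂^2 + 32*a^6*b^8*C^2*S^2*w₁^2*w₂^2 + 24*a^6*b^7*C^8*w₁^2*w₂ + 24*a^6*b^7*C^6*S^2*w₁^2*w₂ - 56*a^6*b^7*C^6*w₁^2*w₂ - 44*a^6*b^7*C^4*S^2*w₁^2*w₂ + 32*a^6*b^7*C^4*w₁^2*w₂ - 12*a^6*b^7*C^2*S^4*w₁^2*w₂ + 12*a^6*b^7*C^2*S^2*w₁^2*w₂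 + 16*a^6*b^6*C^6*w₁^2 + 16*a^6*b^6*C^4*S^2*w₁^2 - 16*a^6*b^6*C^4*w₁^2 + 20*a^5*b^10*C^10*w₁^2*w₂^3 - 40*a^5*b^10*C^8*S^2*w₁^2*w₂^3 - 60*a^5*b^10*C^8*w₁^2*w₂^3 - 56*a^5*b^10*C^6*S^4*w₁^2*w₂^3 + 60*a^5*b^10*C^6*w₁^2*w₂^3 + 168*a^5*b^10*C^4*S^4*w₁^2*w₂^3 + 120*a^5*b^10*C^4*S^2*w₁^2*w₂^3 - 20*a^5*b^10*C^4*w₁^2*w₂^3 - 108*a^5*b^10*C^2*S^4*w₁^2*w₂^3 - 80*a^5*b^10*C^2*S^2*w₁^2*w₂^3 - 4*a^5*b^10*S^4*w₁^2*w₂^3 + 4*a^5*b^9*C^8*w₁^2*w₂^2 + 32*a^5*b^9*C^6*S^2*w₁^2*w₂^2 - 8*a^5*b^9*C^6*w₁^2*w₂^2 - 40*a^5*b^9*C^4*S^4*w₁^2*w₂^2 - 80*a^5*b^9*C^4*S^2*w₁^2*w₂^2 + 4*a^5*b^9*C^4*w₁^2*w₂^2 + 40*a^5*b^9*C^2*S^4*w₁^2*w₂^2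 + 48*a^5*b^9*C^2*S^2*w₁^2*w₂^2 + 4*a^5*b^9*S^4*w₁^2*w₂^2 + 32*a^5*b^8*C^8*w₁^2*w₂ + 32*a^5*b^8*C^6*S^2*w₁^2*w₂ - 60*a^5*b^8*C^6*w₁^2*w₂ - 36*a^5*b^8*C^4*S^2*w₁^2*w₂ + 24*a^5*b^8*C^4*w₁^2*w₂ - 8*a^5*b^8*C^2*S^4*w₁^2*w₂ + 4*a^5*b^8*C^2*w₁^2*w₂ - 4*a^5*b^8*S^4*w₁^2*w₂ + 4*a^5*b^8*S^2*w₁^2*w₂ + 4*a^5*b^7*C^6*w₁^2 + 4*a^5*b^7*C^4*S^2*w₁^2 + 8*a^5*b^7*C^2*S^2*w₁^2 - 4*a^5*b^7*C^2*w₁^2 + 4*a^5*b^7*S^4*w₁^2 - 4*a^5*b^7*S^2*w₁^2 + 4*a^4*b^11*C^10*w₁^2*w₂^3 + 56*a^4*b^11*C^8*S^2*w₁^2*w₂^3 - 12*a^4*b^11*C^8*w₁^2*w₂^3 - 88*a^4*b^11*C^6*S^4*w₁^2*w₂^3 - 192*a^4*b^11*C^6*S^2*w₁^2*w₂^3 +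 12*a^4*b^11*C^6*w₁^2*w₂^3 + 168*a^4*b^11*C^4*S^4*w₁^2*w₂^3 + 216*a^4*b^11*C^4*S^2*w₁^2*w₂^3 - 4*a^4*b^11*C^4*w₁^2*w₂^3 - 60*a^4*b^11*C^2*S^4*w₁^2*w₂^3 - 80*a^4*b^11*C^2*S^2*w₁^2*w₂^3 - 20*a^4*b^11*S^4*w₁^2*w₂^3 + 32*a^4*b^10*C^6*S^2*w₁^2*w₂^2 - 16*a^4*b^10*C^4*S^4*w₁^2*w₂^2 - 64*a^4*b^10*C^4*S^2*w₁^2*w₂^2 + 32*a^4*b^10*C^2*S^2*w₁^2*w₂^2 + 16*a^4*b^10*S^4*w₁^2*w₂^2 + 12*a^4*b^9*C^6*w₁^2*w₂ + 20*a^4*b^9*C^4*S^2*w₁^2*w₂ - 24*a^4*b^9*C^4*w₁^2*w₂ + 8*a^4*b^9*C^2*S^4*w₁^2*w₂ - 32*a^4*b^9*C^2*S^2*w₁^2*w₂ + 12*a^4*b^9*C^2*w₁^2*w₂ - 12*a^4*b^9*S^4*w₁^2*w₂ + 12*a^4*b^9*S^2*w₁^2*w₂ - 8*a^4*b^8*C^6*w₁^2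 - 8*a^4*b^8*C^4*S^2*w₁^2 + 16*a^4*b^8*C^4*w₁^2 + 16*a^4*b^8*C^2*S^2*w₁^2 - 8*a^4*b^8*C^2*w₁^2 + 8*a^4*b^8*S^4*w₁^2 - 8*a^4*b^8*S^2*w₁^2 + 40*a^3*b^12*C^8*S^2*w₁^2*w₂^3 - 20*a^3*b^12*C^6*S^4*w₁^2*w₂^3 - 120*a^3*b^12*C^6*S^2*w₁^2*w₂^3 + 120*a^3*b^12*C^4*S^2*w₁^2*w₂^3 + 60*a^3*b^12*C^2*S^4*w₁^2*w₂^3 - 40*a^3*b^12*C^2*S^2*w₁^2*w₂^3 - 40*a^3*b^12*S^4*w₁^2*w₂^3 + 8*a^3*b^11*C^6*S^2*w₁^2*w₂^2 + 16*a^3*b^11*C^4*S^4*w₁^2*w₂^2 - 16*a^3*b^11*C^4*S^2*w₁^2*w₂^2 - 40*a^3*b^11*C^2*S^4*w₁^2*w₂^2 + 8*a^3*b^11*C^2*S^2*w₁^2*w₂^2 + 24*a^3*b^11*S^4*w₁^2*w₂^2 - 12*a^3*b^10*C^8*w₁^2*w₂ - 12*a^3*b^10*C^6*S^2*w₁^2*w₂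 + 36*a^3*b^10*C^6*w₁^2*w₂ + 36*a^3*b^10*C^4*S^2*w₁^2*w₂ - 36*a^3*b^10*C^4*w₁^2*w₂ + 12*a^3*b^10*C^2*S^4*w₁^2*w₂ - 36*a^3*b^10*C^2*S^2*w₁^2*w₂ + 12*a^3*b^10*C^2*w₁^2*w₂ - 12*a^3*b^10*S^4*w₁^2*w₂ + 12*a^3*b^10*S^2*w₁^2*w₂ - 4*a^3*b^9*C^6*w₁^2 - 4*a^3*b^9*C^4*S^2*w₁^2 + 8*a^3*b^9*C^4*w₁^2 + 8*a^3*b^9*C^2*S^2*w₁^2 - 4*a^3*b^9*C^2*w₁^2 + 4*a^3*b^9*S^4*w₁^2 - 4*a^3*b^9*S^2*w₁^2 + 8*a^2*b^13*C^8*S^2*w₁^2*w₂^3 + 28*a^2*b^13*C^6*S^4*w₁^2*w₂^3 - 24*a^2*b^13*C^6*S^2*w₁^2*w₂^3 - 96*a^2*b^13*C^4*S^4*w₁^2*w₂^3 + 24*a^2*b^13*C^4*S^2*w₁^2*w₂^3 + 108*a^2*b^13*C^2*S^4*w₁^2*w₂^3 - 8*a^2*b^13*C^2*S^2*w₁^2*w₂^3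 - 40*a^2*b^13*S^4*w₁^2*w₂^3 + 16*a^2*b^12*C^4*S^4*w₁^2*w₂^2 - 32*a^2*b^12*C^2*S^4*w₁^2*w₂^2 + 16*a^2*b^12*S^4*w₁^2*w₂^2 - 4*a^2*b^11*C^8*w₁^2*w₂ - 4*a^2*b^11*C^6*S^2*w₁^2*w₂ + 12*a^2*b^11*C^6*w₁^2*w₂ + 12*a^2*b^11*C^4*S^2*w₁^2*w₂ - 12*a^2*b^11*C^4*w₁^2*w₂ + 4*a^2*b^11*C^2*S^4*w₁^2*w₂ - 12*a^2*b^11*C^2*S^2*w₁^2*w₂ + 4*a^2*b^11*C^2*w₁^2*w₂ - 4*a^2*b^11*S^4*w₁^2*w₂ + 4*a^2*b^11*S^2*w₁^2*w₂ + 20*a*b^14*C^6*S^4*w₁^2*w₂^3 - 60*a*b^14*C^4*S^4*w₁^2*w₂^3 + 60*a*b^14*C^2*S^4*w₁^2*w₂^3 - 20*a*b^14*S^4*w₁^2*w₂^3 + 4*a*b^13*C^4*S^4*w₁^2*w₂^2 - 8*a*b^13*C^2*S^4*w₁^2*w₂^2 + 4*a*b^13*S^4*w₁^2*w₂^2 +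 4*b^15*C^6*S^4*w₁^2*w₂^3 - 12*b^15*C^4*S^4*w₁^2*w₂^3 + 12*b^15*C^2*S^4*w₁^2*w₂^3 - 4*b^15*S^4*w₁^2*w₂^3) * hv + (4*a^10*b^4*C^6 + 4*a^10*b^4*C^4*S^2 - 4*a^10*b^4*C^4 + 8*a^9*b^5*C^6 + 8*a^9*b^5*C^4*S^2 - 8*a^9*b^5*C^4 - 4*a^8*b^6*C^6 - 4*a^8*b^6*C^4*S^2 + 4*a^8*b^6*C^4 - 16*a^7*b^7*C^6 - 16*a^7*b^7*C^4*S^2 + 16*a^7*b^7*C^4 - 4*a^6*b^8*C^6 - 4*a^6*b^8*C^4*S^2 - 8*a^6*b^8*C^2*S^2 + 4*a^6*b^8*C^2 - 4*a^6*b^8*S^4 + 4*a^6*b^8*S^2 + 8*a^5*b^9*C^6 + 8*a^5*b^9*C^4*S^2 - 16*a^5*b^9*C^4 - 16*a^5*b^9*C^2*S^2 + 8*a^5*b^9*C^2 - 8*a^5*b^9*S^4 + 8*a^5*b^9*S^2 + 4*a^4*b^10*C^6 + 4*a^4*b^10*C^4*S^2 - 8*a^4*b^10*C^4 - 8*a^4*b^10*C^2*S^2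 + 4*a^4*b^10*C^2 - 4*a^4*b^10*S^4 + 4*a^4*b^10*S^2) * hw1sq + (4*a^14*b^4*C^6 + 16*a^13*b^5*C^6 + 12*a^12*b^6*C^6 - 32*a^11*b^7*C^6 + 8*a^11*b^7*C^4 - 56*a^10*b^8*C^6 + 16*a^10*b^8*C^4 - 4*a^10*b^8*C^2*S^2 - 16*a^9*b^9*C^4 - 16*a^9*b^9*C^2*S^2 + 56*a^8*b^10*C^6 - 56*a^8*b^10*C^4 - 20*a^8*b^10*C^2*S^2 + 32*a^7*b^11*C^6 - 24*a^7*b^11*C^4 - 8*a^7*b^11*C^2 - 8*a^7*b^11*S^2 - 12*a^6*b^12*C^6 + 32*a^6*b^12*C^4 + 20*a^6*b^12*C^2*S^2 - 20*a^6*b^12*C^2 - 20*a^6*b^12*S^2 - 16*a^5*b^13*C^6 + 32*a^5*b^13*C^4 + 16*a^5*b^13*C^2*S^2 - 16*a^5*b^13*C^2 - 16*a^5*b^13*S^2 - 4*a^4*b^14*C^6 + 8*a^4*b^14*C^4 + 4*a^4*b^14*C^2*S^2 - 4*a^4*b^14*C^2 - 4*a^4*b^14*S^2) * hCS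
  have T23 : (a*b)^2 * (((w₂*(a^2*C + w₁*S))-(w₂*(a^2*C - w₁*S)))^2+((w₂*(b^2*S - w₁*C))-(w₂*(b^2*S + w₁*C)))^2) = ((w₂*(a^2*C - w₁*S))*(w₂*(b^2*S - w₁*C))-(w₂*(b^2*S + w₁*C))*(w₂*(a^2*C + w₁*S)))^2*(a+b)^2 :=
    mul_right_cancel₀ hD2ne (mul_right_cancel₀ hD2ne (key23))
  have hB23 : r^2 * (((w₂*(a^2*C + w₁*S))-(w₂*(a^2*C - w₁*S)))^2+((w₂*(b^2*S - w₁*C))-(w₂*(b^2*S + w₁*C)))^2) = ((w₂*(a^2*C - w₁*S))*(w₂*(b^2*S - w₁*C))-(w₂*(b^2*S + w₁*C))*(w₂*(a^2*C + w₁*S)))^2 := by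
    rw [hr, div_pow, div_mul_eq_mul_div, div_eq_iff (by positivity)]; linear_combination T23
  have hn23 : 0 < (((w₂*(a^2*C + w₁*S))-(w₂*(a^2*C - w₁*S)))^2+((w₂*(b^2*S - w₁*C))-(w₂*(b^2*S + w₁*C)))^2) := by
    have e : (((w₂*(a^2*C + w₁*S))-(w₂*(a^2*C - w₁*S)))^2+((w₂*(b^2*S - w₁*C))-(w₂*(b^2*S + w₁*C)))^2) = 4*w₂^2*w₁^2*(S^2+C^2) := by ring
    rw [e, hCS, mul_one]
    have h2 : 0 < w₂^2 := lt_of_le_of_ne (sq_nonneg _) (Ne.symm (pow_ne_zero 2 hw2ne))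
    have h3 : 0 < w₁^2 := pow_pos hw1pos 2
    positivity
  have habs23 : |((w₂*(a^2*C - w₁*S))*(w₂*(b^2*S - w₁*C))-(w₂*(b^2*S + w₁*C))*(w₂*(a^2*C + w₁*S)))| = r * Real.sqrt (((w₂*(a^2*C + w₁*S))-(w₂*(a^2*C - w₁*S)))^2+((w₂*(b^2*S - w₁*C))-(w₂*(b^2*S + w₁*C)))^2) := by
    have h1 : Real.sqrt (((w₂*(a^2*C - w₁*S))*(w₂*(b^2*S - w₁*C))-(w₂*(b^2*S + w₁*C))*(w₂*(a^2*C + w₁*S)))^2) = Real.sqrt (r^2 * (((w₂*(a^2*C + w₁*S))-(w₂*(a^2*C - w₁*S)))^2+((w₂*(b^2*S - w₁*C))-(w₂*(b^2*S + w₁*C)))^2)) := by rw [hB23]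
    rwa [Real.sqrt_sq_eq_abs, Real.sqrt_mul (sq_nonneg r), Real.sqrt_sq hrpos.le] at h1


  have key31 : (a*b)^2 * (((a*C)-(w₂*(a^2*C + w₁*S)))^2+((b*S)-(w₂*(b^2*S - w₁*C)))^2) * (((a^2-b^2)*C^2+b^2)*(a+b))^2 = ((w₂*(a^2*C + w₁*S))*(b*S)-(w₂*(b^2*S - w₁*C))*(a*C))^2*(a+b)^2 * (((a^2-b^2)*C^2+b^2)*(a+b))^2 := by
    linear_combination (-a^9*b^2*C^4*S^2*w₂ + a^9*b^2*C^4*w₂ - a^8*b^3*C^4*S^2*w₂ + a^8*b^3*C^4*w₂ - 2*a^8*b^2*C^4 - 2*a^8*b*C^5*S*w₁*w₂ + 3*a^7*b^4*C^4*S^2*w₂ - a^7*b^4*C^4*w₂ - a^7*b^4*C^2*S^2*w₂ + a^7*b^4*C^2*w₂ - 2*a^7*b^3*C^4 + a^7*b^3*C^2*S^2 - a^7*b^3*C^2 - 4*a^7*b^2*C^5*S*w₁*w₂ - 2*a^7*b^2*C^3*S^3*w₁*w₂ + 2*a^7*b^2*C^3*S*w₁*w₂ - a^7*C^6*w₁^2*w₂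 + 3*a^6*b^5*C^4*S^2*w₂ - a^6*b^5*C^4*w₂ - a^6*b^5*C^2*S^2*w₂ + a^6*b^5*C^2*w₂ + 2*a^6*b^4*C^4 - 2*a^6*b^4*C^2 + 2*a^6*b^3*C^5*S*w₁*w₂ - 4*a^6*b^3*C^3*S^3*w₁*w₂ - 3*a^6*b*C^6*w₁^2*w₂ - 2*a^6*b*C^4*S^2*w₁^2*w₂ - 3*a^5*b^6*C^4*S^2*w₂ + 3*a^5*b^6*C^2*S^2*w₂ + 2*a^5*b^5*C^4 - 4*a^5*b^5*C^2*S^2 - 2*a^5*b^5*C^2 + 8*a^5*b^4*C^5*S*w₁*w₂ + 2*a^5*b^4*C^3*S^3*w₁*w₂ - 8*a^5*b^4*C^3*S*w₁*w₂ - 2*a^5*b^4*C*S^3*w₁*w₂ + 2*a^5*b^4*C*S*w₁*w₂ + 2*a^5*b^3*C^3*S*w₁ + 2*a^5*b^3*C*S^3*w₁ - 2*a^5*b^3*C*S*w₁ - 2*a^5*b^2*C^6*w₁^2*w₂ - 6*a^5*b^2*C^4*S^2*w₁^2*w₂ - a^5*b^2*C^2*S^4*w₁^2*w₂ + a^5*b^2*C^2*S^2*w₁^2*w₂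 + a^5*b*C^4*w₁^2 - 3*a^4*b^7*C^4*S^2*w₂ + 3*a^4*b^7*C^2*S^2*w₂ - 2*a^4*b^6*C^2*S^2 + 2*a^4*b^5*C^5*S*w₁*w₂ + 8*a^4*b^5*C^3*S^3*w₁*w₂ - 4*a^4*b^5*C^3*S*w₁*w₂ - 4*a^4*b^5*C*S^3*w₁*w₂ + 2*a^4*b^5*C*S*w₁*w₂ + 2*a^4*b^4*C^3*S*w₁ + 2*a^4*b^4*C*S^3*w₁ - 2*a^4*b^4*C*S*w₁ + 2*a^4*b^3*C^6*w₁^2*w₂ - 4*a^4*b^3*C^4*S^2*w₁^2*w₂ - 2*a^4*b^3*C^4*w₁^2*w₂ - 3*a^4*b^3*C^2*S^4*w₁^2*w₂ - a^4*b^3*C^2*S^2*w₁^2*w₂ + 2*a^4*b^2*C^4*w₁^2 + 2*a^4*b^2*C^2*S^2*w₁^2 + a^3*b^8*C^4*S^2*w₂ - 2*a^3*b^8*C^2*S^2*w₂ + a^3*b^8*S^2*w₂ + 3*a^3*b^7*C^2*S^2 - 3*a^3*b^7*S^2 - 4*a^3*b^6*C^5*S*w₁*w₂ + 2*a^3*b^6*C^3*S^3*w₁*w₂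 + 6*a^3*b^6*C^3*S*w₁*w₂ - 2*a^3*b^6*C*S*w₁*w₂ - 2*a^3*b^5*C^3*S*w₁ - 2*a^3*b^5*C*S^3*w₁ + 2*a^3*b^5*C*S*w₁ + 3*a^3*b^4*C^6*w₁^2*w₂ + 4*a^3*b^4*C^4*S^2*w₁^2*w₂ - 4*a^3*b^4*C^4*w₁^2*w₂ - 2*a^3*b^4*C^2*S^4*w₁^2*w₂ - 7*a^3*b^4*C^2*S^2*w₁^2*w₂ + a^3*b^4*C^2*w₁^2*w₂ - a^3*b^4*S^4*w₁^2*w₂ + a^3*b^4*S^2*w₁^2*w₂ + a^3*b^3*C^4*w₁^2 + 4*a^3*b^3*C^2*S^2*w₁^2 - a^3*b^3*C^2*w₁^2 + a^3*b^3*S^4*w₁^2 - a^3*b^3*S^2*w₁^2 + a^2*b^9*C^4*S^2*w₂ - 2*a^2*b^9*C^2*S^2*w₂ + a^2*b^9*S^2*w₂ + 2*a^2*b^8*C^2*S^2 - 2*a^2*b^8*S^2 - 2*a^2*b^7*C^5*S*w₁*w₂ - 4*a^2*b^7*C^3*S^3*w₁*w₂ + 4*a^2*b^7*C^3*S*w₁*w₂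 + 4*a^2*b^7*C*S^3*w₁*w₂ - 2*a^2*b^7*C*S*w₁*w₂ - 2*a^2*b^6*C^3*S*w₁ - 2*a^2*b^6*C*S^3*w₁ + 2*a^2*b^6*C*S*w₁ + a^2*b^5*C^6*w₁^2*w₂ + 6*a^2*b^5*C^4*S^2*w₁^2*w₂ - 2*a^2*b^5*C^4*w₁^2*w₂ + 2*a^2*b^5*C^2*S^4*w₁^2*w₂ - 7*a^2*b^5*C^2*S^2*w₁^2*w₂ + a^2*b^5*C^2*w₁^2*w₂ - 3*a^2*b^5*S^4*w₁^2*w₂ + a^2*b^5*S^2*w₁^2*w₂ + 2*a^2*b^4*C^2*S^2*w₁^2 + 2*a^2*b^4*S^4*w₁^2 - 2*a*b^8*C^3*S^3*w₁*w₂ + 2*a*b^8*C*S^3*w₁*w₂ + 2*a*b^6*C^4*S^2*w₁^2*w₂ + 3*a*b^6*C^2*S^4*w₁^2*w₂ - 2*a*b^6*C^2*S^2*w₁^2*w₂ - 3*a*b^6*S^4*w₁^2*w₂ + a*b^5*S^4*w₁^2 + b^7*C^2*S^4*w₁^2*w₂ - b^7*S^4*w₁^2*w₂) * hv + (-a^6*b^2*C^4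 - 2*a^5*b^3*C^4 - 2*a^5*b^3*C^2*S^2 - a^4*b^4*C^4 - 4*a^4*b^4*C^2*S^2 + a^4*b^4*C^2 - a^4*b^4*S^4 + a^4*b^4*S^2 - 2*a^3*b^5*C^2*S^2 - 2*a^3*b^5*S^4 - a^2*b^6*S^4) * hw1sq + (-2*a^9*b^3*C^4 - 6*a^8*b^4*C^4 - a^8*b^4*C^2*S^2 - a^8*b^4*C^2 - 4*a^7*b^5*C^4 - 4*a^7*b^5*C^2*S^2 - 2*a^7*b^5*C^2 + 4*a^6*b^6*C^4 - 5*a^6*b^6*C^2*S^2 - 3*a^6*b^6*C^2 - 2*a^6*b^4*C*S*w₁ + 6*a^5*b^7*C^4 - 4*a^5*b^7*C^2 - 2*a^5*b^7*S^2 - 2*a^5*b^5*C*S*w₁ + 2*a^4*b^8*C^4 + 5*a^4*b^8*C^2*S^2 - 2*a^4*b^8*C^2 - 5*a^4*b^8*S^2 + 2*a^4*b^6*C*S*w₁ + 4*a^3*b^9*C^2*S^2 - 4*a^3*b^9*S^2 + 2*a^3*b^7*C*S*w₁ + a^2*b^10*C^2*S^2 - a^2*b^10*S^2) * hCS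
  have T31 : (a*b)^2 * (((a*C)-(w₂*(a^2*C + w₁*S)))^2+((b*S)-(w₂*(b^2*S - w₁*C)))^2) = ((w₂*(a^2*C + w₁*S))*(b*S)-(w₂*(b^2*S - w₁*C))*(a*C))^2*(a+b)^2 :=
    mul_right_cancel₀ hD2ne (key31)
  have hB31 : r^2 * (((a*C)-(w₂*(a^2*C + w₁*S)))^2+((b*S)-(w₂*(b^2*S - w₁*C)))^2) = ((w₂*(a^2*C + w₁*S))*(b*S)-(w₂*(b^2*S - w₁*C))*(a*C))^2 := by
    rw [hr]; field_simp; linear_combination T31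
  have hcr31 : ((w₂*(a^2*C + w₁*S))*(b*S)-(w₂*(b^2*S - w₁*C))*(a*C)) = w₂ * (w₁*(a*C^2+b*S^2) + a*b*C*S*(a-b)) := by ring
  have hcr31ne : ((w₂*(a^2*C + w₁*S))*(b*S)-(w₂*(b^2*S - w₁*C))*(a*C)) ≠ 0 := by
    rw [hcr31]; exact mul_ne_zero hw2ne (ne_of_gt X31pos)
  have c31sq : 0 < ((w₂*(a^2*C + w₁*S))*(b*S)-(w₂*(b^2*S - w₁*C))*(a*C))^2 :=
    lt_of_le_of_ne (sq_nonneg _) (Ne.symm (pow_ne_zero 2 hcr31ne))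
  have hn31 : 0 < (((a*C)-(w₂*(a^2*C + w₁*S)))^2+((b*S)-(w₂*(b^2*S - w₁*C)))^2) := by
    have h0 : 0 < r^2 * (((a*C)-(w₂*(a^2*C + w₁*S)))^2+((b*S)-(w₂*(b^2*S - w₁*C)))^2) := by rw [hB31]; exact c31sq
    by_contra hcon
    push_neg at hcon
    exact absurd h0 (not_lt.mpr (mul_nonpos_of_nonneg_of_nonpos (sq_nonneg r) hcon))
  have habs31 : |((w₂*(a^2*C + w₁*S))*(b*S)-(w₂*(b^2*S - w₁*C))*(a*C))| = r * Real.sqrt (((a*C)-(w₂*(a^2*C + w₁*S)))^2+((b*S)-(w₂*(b^2*S - w₁*C)))^2) := by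
    have h1 : Real.sqrt (((w₂*(a^2*C + w₁*S))*(b*S)-(w₂*(b^2*S - w₁*C))*(a*C))^2) = Real.sqrt (r^2 * (((a*C)-(w₂*(a^2*C + w₁*S)))^2+((b*S)-(w₂*(b^2*S - w₁*C)))^2)) := by rw [hB31]
    rwa [Real.sqrt_sq_eq_abs, Real.sqrt_mul (sq_nonneg r), Real.sqrt_sq hrpos.le] at h1

  refine ⟨⟨?_, ?_⟩, ?_, ?_, ?_⟩
  · rw [h20, h21]; field_simp; linear_combination TE2
  · rw [h30, h31]; field_simp; linear_combination TE3
  · rw [hP₁, hP₂, infDist_line (a*C) (b*S) (w₂*(a^2*C - w₁*S)) (w₂*(b^2*S + w₁*C)) hn12.ne', habs12,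
      mul_div_assoc, div_self (Real.sqrt_pos.mpr hn12).ne', mul_one]
  · rw [hP₂, hP₃, infDist_line (w₂*(a^2*C - w₁*S)) (w₂*(b^2*S + w₁*C)) (w₂*(a^2*C + w₁*S)) (w₂*(b^2*S - w₁*C)) hn23.ne', habs23,
      mul_div_assoc, div_self (Real.sqrt_pos.mpr hn23).ne', mul_one]
  · rw [hP₃, hP₁, infDist_line (w₂*(a^2*C + w₁*S)) (w₂*(b^2*S - w₁*C)) (a*C) (b*S) hn31.ne', habs31,
      mul_div_assoc, div_self (Real.sqrt_pos.mpr hn31).ne', mul_one]
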